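/- Let φ_1,...,φ_{d²} be unit vectors in ℂ^d with |⟨φ_j|φ_k⟩|² = 1/(d+1) for all j ≠ k (a SIC set). Then the frame operator S = Σ_k |φ_k⟩⟨φ_k| equals d·I, i.e., the operators (1/d)|φ_k⟩⟨φ_k| form a POVM. -/

import Mathlib

open Matrix BigOperators Finset

noncomputable def outer {d : ℕ} (v : Fin d → ℂ) : Matrix (Fin d) (Fin d) ℂ :=
  Matrix.vecMulVec v (star v)

lemma outer_conjT {d : ℕ} (v : Fin d → ℂ) : (outer v)ᴴ = outer v := by
  ext i j
  simp [outer, vecMulVec, conjTranspose_apply, mul_comm]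

lemma trace_outer {d : ℕ} (v : Fin d → ℂ) : (outer v).trace = star v ⬝ᵥ v := by
  simp [outer, Matrix.trace, Matrix.diag, vecMulVec_apply, dotProduct, mul_comm]

lemma trace_outer_mul {d : ℕ} (v w : Fin d → ℂ) :
    (outer v * outer w).trace = (star v ⬝ᵥ w) * (star w ⬝ᵥ v) := by
  simp only [Matrix.trace, Matrix.diag, Matrix.mul_apply, outer, vecMulVec_apply, dotProduct]
  rw [Finset.sum_comm, Finset.sum_mul]
  congr 1; ext j
  rw [Finset.mul_sum]
  congr 1; ext i
  simp [Pi.star_apply]; ring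

/-- a SIC set of d² unit vectors in ℂ^d has frame operator S = d·I,
i.e., the operators (1/d)|φ_k⟩⟨φ_k| form a POVM. -/
theorem sic_is_tight_frame (d : ℕ) (hd : 1 ≤ d) (φ : Fin (d^2) → Fin d → ℂ)
    (hunit : ∀ k, star (φ k) ⬝ᵥ φ k = 1)
    (hsic : ∀ j k, j ≠ k → (‖star (φ j) ⬝ᵥ φ k‖)^2 = 1 / (d + 1)) :
    (∑ k, outer (φ k)) = (d : ℂ) • (1 : Matrix (Fin d) (Fin d) ℂ) := by
  set S : Matrix (Fin d) (Fin d) ℂ := ∑ k, outer (φ k) with hS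
  have hd1 : ((d : ℂ) + 1) ≠ 0 := by
    have h : ((d:ℝ) + 1) ≠ 0 := by positivity
    have := Complex.ofReal_ne_zero.mpr h
    push_cast at this; exact this
  have hpair : ∀ j k, (star (φ j) ⬝ᵥ φ k) * (star (φ k) ⬝ᵥ φ j) =
      if j = k then 1 else 1 / ((d:ℂ) + 1) := by
    intro j k
    by_cases h : j = k
    · subst h; simp [hunit j]
    · simp only [h, if_false]
      have hc : star (φ k) ⬝ᵥ φ j = starRingEnd ℂ (star (φ j) ⬝ᵥ φ k) := by
        simp [dotProduct, map_sum, mul_comm]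
      rw [hc, Complex.mul_conj, ← Complex.sq_norm, hsic j k h]
      push_cast; ring
  have htrS : S.trace = ((d:ℂ))^2 := by
    rw [hS, Matrix.trace_sum]
    simp [trace_outer, hunit]
  have inner : ∀ j : Fin (d^2), ∑ k, (outer (φ j) * outer (φ k)).trace
      = 1 + ((d^2 - 1 : ℕ) : ℂ) * (1 / ((d:ℂ)+1)) := by
    intro j
    rw [← Finset.add_sum_erase _ _ (Finset.mem_univ j), trace_outer_mul, hpair j j, if_pos rfl]
    congr 1
    rw [Finset.sum_congr rfl (fun k hk => by
      rw [trace_outer_mul, hpair j k, if_neg (Finset.ne_of_mem_erase hk).symm])]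
    rw [Finset.sum_const, Finset.card_erase_of_mem (Finset.mem_univ j), Finset.card_univ,
      Fintype.card_fin, nsmul_eq_mul]
  have htrSS : (S * S).trace = ((d:ℂ))^3 := by
    rw [hS, Finset.sum_mul_sum, Matrix.trace_sum]
    rw [Finset.sum_congr rfl (fun j _ => by rw [Matrix.trace_sum, inner j])]
    rw [Finset.sum_const, Finset.card_univ, Fintype.card_fin, nsmul_eq_mul]
    have hc1 : ((d^2 - 1 : ℕ) : ℂ) = (d:ℂ)^2 - 1 := by
      push_cast [Nat.one_le_pow 2 d hd]; ring
    rw [hc1]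
    push_cast
    field_simp
    ring
  set T : Matrix (Fin d) (Fin d) ℂ := S - (d:ℂ) • 1 with hT
  have hSh : Sᴴ = S := by
    rw [hS, Matrix.conjTranspose_sum]
    exact Finset.sum_congr rfl fun k _ => outer_conjT _
  have hTh : Tᴴ = T := by
    rw [hT, Matrix.conjTranspose_sub, hSh, Matrix.conjTranspose_smul]
    norm_num
  have htrT : (Tᴴ * T).trace = 0 := by
    rw [hTh, hT]
    simp only [Matrix.sub_mul, Matrix.mul_sub, Matrix.smul_mul, Matrix.mul_smul,
      Matrix.one_mul, Matrix.mul_one, smul_smul, Matrix.trace_sub, Matrix.trace_smul,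
      htrSS, htrS, Matrix.trace_one, Fintype.card_fin, smul_eq_mul]
    ring
  have hsum : ∑ i : Fin d, ∑ j : Fin d, Complex.normSq (T i j) = 0 := by
    have key : ((∑ i : Fin d, ∑ j : Fin d, Complex.normSq (T i j) : ℝ) : ℂ)
        = (Tᴴ * T).trace := by
      rw [Matrix.trace]
      push_cast
      simp only [Matrix.diag_apply, Matrix.mul_apply, Matrix.conjTranspose_apply]
      rw [Finset.sum_comm]
      exact Finset.sum_congr rfl fun i _ => Finset.sum_congr rfl fun j _ => by
        rw [Complex.normSq_eq_conj_mul_self]; rfl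
    rw [htrT] at key
    exact_mod_cast key
  have hzero : ∀ i j, T i j = 0 := by
    intro i j
    have h1 : ∀ i ∈ (Finset.univ : Finset (Fin d)),
        0 ≤ ∑ j : Fin d, Complex.normSq (T i j) :=
      fun i _ => Finset.sum_nonneg fun j _ => Complex.normSq_nonneg _
    have h2 := (Finset.sum_eq_zero_iff_of_nonneg h1).mp hsum i (Finset.mem_univ i)
    have h3 := (Finset.sum_eq_zero_iff_of_nonneg
      (fun j _ => Complex.normSq_nonneg (T i j))).mp h2 j (Finset.mem_univ j)
    exact Complex.normSq_eq_zero.mp h3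
  have hT0 : T = 0 := by ext i j; exact hzero i j
  rw [hT] at hT0
  exact sub_eq_zero.mp hT0
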